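/- For all integers k ≥ 1 and j ≥ 2, the generalized transformation coefficients satisfy the recurrence j · S(k, j) = S(k−1, j) − S(k, j−1); equivalently, S(k, j) = −(1/j) · S(k, j−1) + (1/j) · S(k−1, j). -/

import Mathlib

/-- The generalized transformation coefficient
`S k j = (1/j!) · Σ_{m=1}^{j} C(j,m) · (−1)^{j−m} · m^{−k}`. -/
noncomputable def S (k j : ℕ) : ℝ :=
  (1 / (Nat.factorial j : ℝ)) *
    ∑ m ∈ Finset.Icc 1 j, (Nat.choose j m : ℝ) * (-1 : ℝ) ^ (j - m) / (m : ℝ) ^ k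

lemma key_nat (j m : ℕ) (hj : 1 ≤ j) : j * Nat.choose (j-1) m = (j - m) * Nat.choose j m := by
  obtain ⟨n, rfl⟩ : ∃ n, j = n + 1 := ⟨j - 1, by omega⟩
  simp only [Nat.add_sub_cancel]
  rw [Nat.add_one_mul_choose_eq, Nat.choose_succ_right_eq]
  ring

theorem stmt_0 (k j : ℕ) (hk : 1 ≤ k) (hj : 2 ≤ j) :
    (j : ℝ) * S k j = S (k - 1) j - S k (j - 1) := by
  have hj1 : j - 1 + 1 = j := by omega
  have hfacpos : (0:ℝ) < Nat.factorial j := by positivity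
  have hfac : (Nat.factorial j : ℝ) = j * Nat.factorial (j-1) := by
    conv_lhs => rw [← hj1]
    rw [Nat.factorial_succ]
    push_cast [hj1]
    ring
  unfold S
  have hext : ∑ m ∈ Finset.Icc 1 (j-1),
      (Nat.choose (j-1) m : ℝ) * (-1 : ℝ) ^ (j - 1 - m) / (m : ℝ) ^ k
      = ∑ m ∈ Finset.Icc 1 j,
      (Nat.choose (j-1) m : ℝ) * (-1 : ℝ) ^ (j - 1 - m) / (m : ℝ) ^ k := by
    conv_rhs => rw [← hj1]
    rw [Finset.sum_Icc_succ_top (by omega)]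
    simp only [Nat.add_sub_cancel]
    rw [Nat.choose_eq_zero_of_lt (by omega : j - 1 < j - 1 + 1)]
    simp
  rw [hext]
  rw [Finset.mul_sum, Finset.mul_sum, Finset.mul_sum, Finset.mul_sum,
    ← Finset.sum_sub_distrib]
  apply Finset.sum_congr rfl
  intro m hm
  simp only [Finset.mem_Icc] at hm
  have hmpos : (0:ℝ) < (m:ℝ) := by exact_mod_cast hm.1
  have hpow : (m:ℝ) ^ k = (m:ℝ) ^ (k-1) * m := by
    conv_lhs => rw [show k = k - 1 + 1 from by omega]
    rw [pow_succ]
  have hfac1pos : (0:ℝ) < Nat.factorial (j-1) := by positivity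
  rcases eq_or_lt_of_le hm.2 with rfl | hlt
  · -- m = j
    rw [Nat.choose_self, Nat.choose_eq_zero_of_lt (by omega : m - 1 < m)]
    simp only [Nat.sub_self, pow_zero, Nat.cast_one, Nat.cast_zero, zero_mul, zero_div,
      mul_zero, sub_zero]
    rw [hpow]
    field_simp
  · -- m < j
    have hsign : (-1 : ℝ) ^ (j - m) = -(-1 : ℝ) ^ (j - 1 - m) := by
      rw [show j - m = (j - 1 - m) + 1 from by omega, pow_succ]
      ring
    have hkey : (j:ℝ) * Nat.choose j m = m * Nat.choose j m + j * Nat.choose (j-1) m := by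
      have h := key_nat j m (by omega)
      have h2 : ((j * Nat.choose (j-1) m : ℕ):ℝ) = (((j - m) * Nat.choose j m : ℕ):ℝ) := by
        exact_mod_cast congrArg (Nat.cast (R := ℝ)) h
      push_cast [Nat.cast_sub hm.2] at h2
      linear_combination -h2
    rw [hsign, hfac, hpow]
    have hjne : (j:ℝ) ≠ 0 := by positivity
    have hFne : (Nat.factorial (j-1):ℝ) ≠ 0 := ne_of_gt hfac1pos
    have hmne : (m:ℝ) ≠ 0 := ne_of_gt hmpos
    have hpne : (m:ℝ)^(k-1) ≠ 0 := pow_ne_zero _ hmne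
    field_simp
    linear_combination (-1:ℝ) * hkey
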